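/- Let m ≡ 0 (mod 4) and n ≥ 2 be integers, and let k be an integer with 1 ≤ k ≤ n−1 and k ≠ ⌊n/2⌋. Then the multiplicity of 2k as an eigenvalue of the adjacency matrix of the generalised pancake graph P_m(n) is at least 3. -/

import Mathlib

open Polynomial

/-- An `m`-coloured permutation of `{1, …, n}`: a pair `(χ, ψ)` of a colour
function `χ : [n] → ℤ/mℤ` and a permutation `ψ` of `[n]` (positions and letters
are 0-indexed, so the letter `1` of the paper corresponds to `0 : Fin n`). -/
abbrev ColouredPerm (m n : ℕ) := (Fin n → ZMod m) × Equiv.Perm (Fin n)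

/-- The map on positions underlying reversal of the prefix of length `k`
(for `1 ≤ k ≤ n`; it is the identity outside this range of `k`). -/
def flipFun (n k : ℕ) : Fin n → Fin n := fun t =>
  if h : t.val < k ∧ k ≤ n then ⟨k - 1 - t.val, by omega⟩ else t

theorem flipFun_involutive (n k : ℕ) : Function.Involutive (flipFun n k) := by
  intro t
  unfold flipFun
  by_cases h : t.val < k ∧ k ≤ n
  · rw [dif_pos h, dif_pos (by simp only [Fin.val_mk]; omega)]
    apply Fin.ext
    simp only [Fin.val_mk]
    omega
  · rw [dif_neg h, dif_neg h]

/-- Reversal of the prefix of length `k`, as a permutation of positions. -/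
def flipPerm (n k : ℕ) : Equiv.Perm (Fin n) := (flipFun_involutive n k).toPerm

/-- The prefix reversal `r_k^ε` acting on `m`-coloured permutations: it
reverses the prefix of length `k` and adds `ε` to the colours in that prefix. -/
def prefixRev (m n : ℕ) (k : ℕ) (ε : ZMod m) (σ : ColouredPerm m n) :
    ColouredPerm m n :=
  (fun t => if t.val < k then σ.1 (flipPerm n k t) + ε else σ.1 t,
   σ.2 * flipPerm n k)

/-- Adjacency in the generalised pancake graph: two distinct coloured
permutations are adjacent iff one is obtained from the other by a prefix
reversal `r_k^ε` with `1 ≤ k ≤ n` and `ε ∈ {+1, -1}`. -/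
def pancakeAdj (m n : ℕ) (σ τ : ColouredPerm m n) : Prop :=
  σ ≠ τ ∧ ∃ k, 1 ≤ k ∧ k ≤ n ∧ ∃ ε : ZMod m, (ε = 1 ∨ ε = -1) ∧
    (τ = prefixRev m n k ε σ ∨ σ = prefixRev m n k ε τ)

/-- The generalised pancake graph `𝒫_m(n)`. -/
def pancakeGraph (m n : ℕ) : SimpleGraph (ColouredPerm m n) where
  Adj := pancakeAdj m n
  symm := ⟨by
    rintro a b ⟨hab, k, hk1, hk2, ε, hε, h⟩
    exact ⟨hab.symm, k, hk1, hk2, ε, hε, h.symm⟩⟩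
  loopless := ⟨by rintro a ⟨h, -⟩; exact h rfl⟩

open Classical in
/-- The (real) adjacency matrix of the generalised pancake graph `𝒫_m(n)`. -/
noncomputable def pancakeAdjMatrix (m n : ℕ) :
    Matrix (ColouredPerm m n) (ColouredPerm m n) ℝ :=
  Matrix.of fun σ τ => if pancakeAdj m n σ τ then 1 else 0

/-- The `i`-th largest eigenvalue (`i = 1, 2, …`) of a real matrix `M`,
i.e. the `i`-th largest root of its characteristic polynomial, counted
with multiplicity (junk value `0` if there are fewer than `i` real roots). -/
noncomputable def nthLargestEig {V : Type*} [Fintype V] [DecidableEq V]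
    (M : Matrix V V ℝ) (i : ℕ) : ℝ :=
  ((M.charpoly.roots.sort (· ≤ ·)).reverse).getD (i - 1) 0

/-- The diagonal matrix `D_n = diag(0, 1, …, n-1)`. -/
noncomputable def Dmat (n : ℕ) : Matrix (Fin n) (Fin n) ℝ :=
  Matrix.diagonal fun j => (j.val : ℝ)

/-- The 0/1 matrix `E_n`, whose `(i, j)` entry (1-indexed) is `1` iff
`i + j ≤ n + 1`. -/
noncomputable def Emat (n : ℕ) : Matrix (Fin n) (Fin n) ℝ :=
  Matrix.of fun j j' => if (j.val + 1) + (j'.val + 1) ≤ n + 1 then 1 else 0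

/-- The `mn × mn` block circulant matrix `circ(B_0, …, B_{m-1})` whose
`(r, s)` block is `B_{s - r mod m}`. -/
def blockCirc (m n : ℕ) (B : ZMod m → Matrix (Fin n) (Fin n) ℝ) :
    Matrix (ZMod m × Fin n) (ZMod m × Fin n) ℝ :=
  Matrix.of fun p q => B (q.1 - p.1) p.2 q.2

/-- The part `V_{i,j}` of the vertex set of `𝒫_m(n)`: those coloured
permutations in which the letter `1` (here `0 : Fin n`) occupies position `j`
with colour `i`. -/
def Vpart (m n : ℕ) (i : ZMod m) (j : Fin n) : Set (ColouredPerm m n) :=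
  {σ | σ.2 j = ⟨0, j.pos⟩ ∧ σ.1 j = i}


section AuxProof
open Matrix

-- basic lemmas
lemma flipPerm_apply (n l : ℕ) (t : Fin n) : flipPerm n l t = flipFun n l t := rfl

lemma flipPerm_inv (n l : ℕ) : (flipPerm n l)⁻¹ = flipPerm n l := rfl

lemma flipFun_small {n l : ℕ} (hl : l ≤ n) {t : Fin n} (ht : t.val < l) :
    flipFun n l t = ⟨l - 1 - t.val, by omega⟩ := by
  unfold flipFun; rw [dif_pos ⟨ht, hl⟩]

lemma flipFun_big {n l : ℕ} {t : Fin n} (ht : ¬ t.val < l) : flipFun n l t = t := by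
  unfold flipFun
  rw [dif_neg (by tauto)]

lemma prefixRev_snd_inv {m n : ℕ} (l : ℕ) (ε : ZMod m) (σ : ColouredPerm m n) (s : Fin n) :
    ((prefixRev m n l ε σ).2)⁻¹ s = flipFun n l (σ.2⁻¹ s) := by
  show ((σ.2 * flipPerm n l)⁻¹) s = _
  rw [_root_.mul_inv_rev, Equiv.Perm.mul_apply, flipPerm_inv]
  rfl

lemma prefixRev_fst {m n : ℕ} (l : ℕ) (ε : ZMod m) (σ : ColouredPerm m n) (t : Fin n) :
    (prefixRev m n l ε σ).1 t = if t.val < l then σ.1 (flipFun n l t) + ε else σ.1 t := rfl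

lemma prefixRev_invol {m n : ℕ} (l : ℕ) (hl : l ≤ n) (ε : ZMod m) (σ : ColouredPerm m n) :
    prefixRev m n l (-ε) (prefixRev m n l ε σ) = σ := by
  refine Prod.ext ?_ ?_
  · funext t
    rw [prefixRev_fst]
    by_cases ht : t.val < l
    · rw [if_pos ht, prefixRev_fst]
      have h2 : (flipFun n l t).val < l := by
        rw [flipFun_small hl ht]; simp only [Fin.val_mk]; omega
      rw [if_pos h2, flipFun_involutive n l t]
      abel
    · rw [if_neg ht, prefixRev_fst, if_neg ht]
  · show σ.2 * flipPerm n l * flipPerm n l = σ.2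
    rw [mul_assoc]
    convert mul_one σ.2
    ext t
    show (flipPerm n l (flipPerm n l t)).val = t.val
    rw [flipPerm_apply, flipPerm_apply, flipFun_involutive n l t]

def eigVec {m n : ℕ} (s kF : Fin n) (w : ZMod m → ℝ) (σ : ColouredPerm m n) : ℝ :=
  if σ.2⁻¹ s = kF then w (σ.1 kF) else 0

lemma eigVec_prefixRev {m n : ℕ} (s kF : Fin n) (w : ZMod m → ℝ)
    (σ : ColouredPerm m n) (l : ℕ) (ε : ZMod m) :
    eigVec s kF w (prefixRev m n l ε σ) =
      if flipFun n l (σ.2⁻¹ s) = kF then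
        (if kF.val < l then w (σ.1 (flipFun n l kF) + ε) else w (σ.1 kF))
      else 0 := by
  unfold eigVec
  rw [prefixRev_snd_inv]
  by_cases h : flipFun n l (σ.2⁻¹ s) = kF
  · rw [if_pos h, if_pos h, prefixRev_fst]
    by_cases h2 : kF.val < l
    · rw [if_pos h2, if_pos h2]
    · rw [if_neg h2, if_neg h2]
  · rw [if_neg h, if_neg h]

lemma eigVec_pair {m n : ℕ} (s kF : Fin n) (w : ZMod m → ℝ)
    (hw : ∀ c : ZMod m, w (c + 1) + w (c + (-1)) = 0)
    (σ : ColouredPerm m n) (l : ℕ) (hl1 : 1 ≤ l) (hl2 : l ≤ n) :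
    eigVec s kF w (prefixRev m n l 1 σ) + eigVec s kF w (prefixRev m n l (-1) σ)
      = if σ.2⁻¹ s = kF ∧ l ≤ kF.val then 2 * eigVec s kF w σ else 0 := by
  rw [eigVec_prefixRev, eigVec_prefixRev]
  set j := σ.2⁻¹ s with hj
  by_cases hjk : j = kF
  · by_cases hlk : l ≤ kF.val
    · have hflip : flipFun n l j = kF := by
        rw [flipFun_big (by omega : ¬ j.val < l), hjk]
      rw [if_pos hflip, if_pos hflip, if_neg (by omega : ¬ kF.val < l),
        if_neg (by omega : ¬ kF.val < l),
        if_pos (show j = kF ∧ l ≤ kF.val from ⟨hjk, hlk⟩)]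
      unfold eigVec
      rw [if_pos hjk]
      ring
    · by_cases hl2k : l = 2 * kF.val + 1
      · have hflip : flipFun n l j = kF := by
          rw [hjk, flipFun_small hl2 (by omega)]
          apply Fin.ext; simp only [Fin.val_mk]; omega
        have hflipk : flipFun n l kF = kF := by
          rw [flipFun_small hl2 (by omega)]
          apply Fin.ext; simp only [Fin.val_mk]; omega
        rw [if_pos hflip, if_pos hflip, if_pos (by omega : kF.val < l),
          if_pos (by omega : kF.val < l), hflipk,
          if_neg (show ¬(j = kF ∧ l ≤ kF.val) from fun h => hlk h.2)]
        exact hw _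
      · have hflip : flipFun n l j ≠ kF := by
          rw [hjk, flipFun_small hl2 (by omega)]
          intro hcon
          have := congrArg Fin.val hcon
          simp only [Fin.val_mk] at this
          omega
        rw [if_neg hflip, if_neg hflip, add_zero,
          if_neg (show ¬(j = kF ∧ l ≤ kF.val) from fun h => hlk h.2)]
  · by_cases hflip : flipFun n l j = kF
    · have hjl : j.val < l := by
        by_contra hc
        rw [flipFun_big hc] at hflip
        exact hjk hflip
      have hkl : kF.val < l := by
        rw [flipFun_small hl2 hjl] at hflip
        have := congrArg Fin.val hflip
        simp only [Fin.val_mk] at this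
        omega
      have hflipk : flipFun n l kF = j := by
        rw [flipFun_small hl2 hjl] at hflip
        have h5 := congrArg Fin.val hflip
        simp only [Fin.val_mk] at h5
        rw [flipFun_small hl2 hkl]
        apply Fin.ext; simp only [Fin.val_mk]; omega
      rw [if_pos hflip, if_pos hflip, if_pos hkl, if_pos hkl, hflipk,
        if_neg (show ¬(j = kF ∧ l ≤ kF.val) from fun h => hjk h.1)]
      exact hw _
    · rw [if_neg hflip, if_neg hflip, add_zero,
        if_neg (show ¬(j = kF ∧ l ≤ kF.val) from fun h => hjk h.1)]

lemma one_ne_negone {m : ℕ} [NeZero m] (hm : 4 ∣ m) : (1 : ZMod m) ≠ -1 := by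
  intro h
  have h2 : ((2 : ℕ) : ZMod m) = 0 := by
    push_cast
    linear_combination h
  have := (ZMod.natCast_eq_zero_iff 2 m).mp h2
  have h4 := Nat.le_of_dvd (by norm_num) this
  interval_cases m <;> omega

lemma zmod_one_ne_zero {m : ℕ} [NeZero m] (hm : 4 ∣ m) : (1 : ZMod m) ≠ 0 := by
  intro h
  have h2 : ((1 : ℕ) : ZMod m) = 0 := by push_cast; exact h
  have := (ZMod.natCast_eq_zero_iff 1 m).mp h2
  have h4 := Nat.le_of_dvd (by norm_num) this
  interval_cases m <;> omega

lemma zmod_negone_ne_zero {m : ℕ} [NeZero m] (hm : 4 ∣ m) : (-1 : ZMod m) ≠ 0 := by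
  intro h
  apply zmod_one_ne_zero hm
  have := congrArg (fun x => -x) h
  simpa using this

lemma prefixRev_apply_fst_zero {m n : ℕ} (σ : ColouredPerm m n) (i : Fin n) (ε : ZMod m)
    (h0 : (0 : ℕ) < n) :
    (prefixRev m n (i.val + 1) ε σ).1 ⟨0, h0⟩ = σ.1 i + ε := by
  rw [prefixRev_fst, if_pos (by simp)]
  have h5 : flipFun n (i.val + 1) ⟨0, h0⟩ = i := by
    rw [flipFun_small (by omega) (by simp)]
    apply Fin.ext; simp
  rw [h5]

lemma prefixRev_inj {m n : ℕ} [NeZero m] (hm : 4 ∣ m) (σ : ColouredPerm m n)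
    {q q' : Fin n × Bool}
    (h : prefixRev m n (q.1.val + 1) (if q.2 then 1 else -1) σ
       = prefixRev m n (q'.1.val + 1) (if q'.2 then 1 else -1) σ) : q = q' := by
  have h0 : 0 < n := q.1.pos
  have hsnd : σ.2 * flipPerm n (q.1.val + 1) = σ.2 * flipPerm n (q'.1.val + 1) :=
    congrArg Prod.snd h
  have hflip : flipPerm n (q.1.val + 1) = flipPerm n (q'.1.val + 1) :=
    mul_left_cancel hsnd
  have e1 : ∀ i : Fin n, (flipFun n (i.val + 1) ⟨0, h0⟩).val = i.val := by
    intro i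
    rw [flipFun_small (by omega) (by simp)]
    simp
  have hval : q.1 = q'.1 := by
    have h1 := congrArg (fun e : Equiv.Perm (Fin n) => (e ⟨0, h0⟩).val) hflip
    simp only [flipPerm_apply] at h1
    rw [e1 q.1, e1 q'.1] at h1
    exact Fin.ext h1
  have hfst := congrArg (fun σ' : ColouredPerm m n => σ'.1 ⟨0, h0⟩) h
  rw [show ((prefixRev m n (q.1.val + 1) (if q.2 then 1 else -1) σ).1 ⟨0, h0⟩)
      = σ.1 q.1 + (if q.2 then 1 else -1) from prefixRev_apply_fst_zero σ q.1 _ h0,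
    show ((prefixRev m n (q'.1.val + 1) (if q'.2 then 1 else -1) σ).1 ⟨0, h0⟩)
      = σ.1 q'.1 + (if q'.2 then 1 else -1) from prefixRev_apply_fst_zero σ q'.1 _ h0,
    hval] at hfst
  have hε : (if q.2 then (1 : ZMod m) else -1) = (if q'.2 then (1 : ZMod m) else -1) :=
    add_left_cancel hfst
  have hbool : q.2 = q'.2 := by
    cases hq : q.2 <;> cases hq' : q'.2 <;> rw [hq, hq'] at hε
    · simp only [Bool.false_eq_true, if_false, if_true] at hε
      exact absurd hε (Ne.symm (one_ne_negone hm))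
    · simp only [Bool.false_eq_true, if_false, if_true] at hε
      exact absurd hε (one_ne_negone hm)
  exact Prod.ext hval hbool

lemma prefixRev_ne {m n : ℕ} [NeZero m] (hm : 4 ∣ m) (σ : ColouredPerm m n)
    (q : Fin n × Bool) :
    prefixRev m n (q.1.val + 1) (if q.2 then 1 else -1) σ ≠ σ := by
  intro h
  have h0 : 0 < n := q.1.pos
  by_cases hq : q.1.val = 0
  · have hfst := congrArg (fun σ' : ColouredPerm m n => σ'.1 ⟨0, h0⟩) h
    rw [prefixRev_apply_fst_zero σ q.1 _ h0] at hfst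
    rw [show q.1 = ⟨0, h0⟩ from Fin.ext hq] at hfst
    have hε : (if q.2 then (1 : ZMod m) else -1) = 0 := by
      have := hfst
      nth_rewrite 2 [show σ.1 ⟨0, h0⟩ = σ.1 ⟨0, h0⟩ + 0 by ring] at this
      exact add_left_cancel this
    cases hq2 : q.2 <;> rw [hq2] at hε
    · simp only [Bool.false_eq_true, if_false] at hε
      exact (zmod_negone_ne_zero hm) hε
    · simp only [if_true] at hε
      exact (zmod_one_ne_zero hm) hε
  · have hsnd := congrArg (fun σ' : ColouredPerm m n => σ'.2 ⟨0, h0⟩) h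
    have h2 : σ.2 (flipPerm n (q.1.val + 1) ⟨0, h0⟩) = σ.2 ⟨0, h0⟩ := hsnd
    have h3 := σ.2.injective h2
    rw [flipPerm_apply, flipFun_small (by omega) (by simp)] at h3
    have := congrArg Fin.val h3
    simp only [Fin.val_mk] at this
    omega

lemma adj_iff {m n : ℕ} [NeZero m] (hm : 4 ∣ m) (σ τ : ColouredPerm m n) :
    pancakeAdj m n σ τ ↔ ∃ q : Fin n × Bool,
      τ = prefixRev m n (q.1.val + 1) (if q.2 then 1 else -1) σ := by
  constructor
  · rintro ⟨hne, l, hl1, hl2, ε, hε, hor⟩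
    have hτσ : τ = prefixRev m n l ε σ ∨ τ = prefixRev m n l (-ε) σ := by
      rcases hor with h | h
      · exact Or.inl h
      · right
        rw [h, prefixRev_invol l hl2 ε τ]
    rcases hτσ with h | h
    · rcases hε with rfl | rfl
      · refine ⟨(⟨l - 1, by omega⟩, true), ?_⟩
        simpa [Nat.sub_add_cancel hl1] using h
      · refine ⟨(⟨l - 1, by omega⟩, false), ?_⟩
        simpa [Nat.sub_add_cancel hl1] using h
    · rcases hε with rfl | rfl
      · refine ⟨(⟨l - 1, by omega⟩, false), ?_⟩
        simpa [Nat.sub_add_cancel hl1] using h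
      · refine ⟨(⟨l - 1, by omega⟩, true), ?_⟩
        simpa [Nat.sub_add_cancel hl1] using h
  · rintro ⟨q, rfl⟩
    refine ⟨(prefixRev_ne hm σ q).symm, q.1.val + 1, by omega, by omega,
      (if q.2 then 1 else -1), ?_, Or.inl rfl⟩
    cases q.2 <;> simp

open Classical in
lemma mulVec_eigVec {m n : ℕ} [NeZero m] (hm : 4 ∣ m) (s kF : Fin n) (w : ZMod m → ℝ)
    (hw : ∀ c : ZMod m, w (c + 1) + w (c + (-1)) = 0) :
    Matrix.mulVec (Matrix.of fun σ τ => if pancakeAdj m n σ τ then (1:ℝ) else 0)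
        (eigVec s kF w)
      = ((2 * kF.val : ℕ) : ℝ) • eigVec s kF w := by
  classical
  funext σ
  have h0 : 0 < n := kF.pos
  show (∑ τ, (if pancakeAdj m n σ τ then (1:ℝ) else 0) * eigVec s kF w τ) = _
  have hsum1 : ∀ τ : ColouredPerm m n, (if pancakeAdj m n σ τ then (1:ℝ) else 0) * eigVec s kF w τ
      = if τ ∈ Finset.image (fun q : Fin n × Bool =>
          prefixRev m n (q.1.val + 1) (if q.2 then 1 else -1) σ) Finset.univ
        then eigVec s kF w τ else 0 := by
    intro τ
    rw [ite_mul, one_mul, zero_mul]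
    refine if_congr ?_ rfl rfl
    rw [adj_iff hm σ τ, Finset.mem_image]
    constructor
    · rintro ⟨q, hq⟩; exact ⟨q, Finset.mem_univ q, hq.symm⟩
    · rintro ⟨q, -, hq⟩; exact ⟨q, hq.symm⟩
  rw [Finset.sum_congr rfl fun τ _ => hsum1 τ, Finset.sum_ite_mem, Finset.univ_inter,
    Finset.sum_image fun q _ q' _ hqq => prefixRev_inj hm σ hqq,
    Fintype.sum_prod_type]
  have hin : ∀ i : Fin n,
      (∑ b : Bool, eigVec s kF w (prefixRev m n (i.val + 1) (if b then 1 else -1) σ))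
      = if σ.2⁻¹ s = kF ∧ i.val + 1 ≤ kF.val then 2 * eigVec s kF w σ else 0 := by
    intro i
    rw [Fintype.sum_bool]
    simpa using eigVec_pair s kF w hw σ (i.val + 1) (by omega) i.isLt
  rw [Finset.sum_congr rfl fun i _ => hin i]
  by_cases hjk : σ.2⁻¹ s = kF
  · simp only [hjk, true_and]
    rw [Fin.sum_univ_eq_sum_range
      (fun t => if t + 1 ≤ kF.val then 2 * eigVec s kF w σ else 0) n]
    rw [← Finset.sum_filter]
    have hfil : (Finset.range n).filter (fun t => t + 1 ≤ kF.val) = Finset.range kF.val := by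
      ext t
      simp only [Finset.mem_filter, Finset.mem_range]
      have := kF.isLt
      omega
    rw [hfil, Finset.sum_const, Finset.card_range, nsmul_eq_mul]
    show _ = ((2 * kF.val : ℕ) : ℝ) * eigVec s kF w σ
    push_cast
    ring
  · simp only [hjk, false_and, if_false, Finset.sum_const_zero]
    show (0:ℝ) = ((2 * kF.val : ℕ) : ℝ) * eigVec s kF w σ
    unfold eigVec
    rw [if_neg hjk, mul_zero]


def w4i : ZMod 4 → ℤ := fun c => if c = 0 then 1 else if c = 2 then -1 else 0

def w4 : ZMod 4 → ℝ := fun c => ((w4i c : ℤ) : ℝ)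

def wm (m : ℕ) (hm : 4 ∣ m) : ZMod m → ℝ := fun c => w4 (ZMod.castHom hm (ZMod 4) c)

def wm' (m : ℕ) (hm : 4 ∣ m) : ZMod m → ℝ := fun c => wm m hm (c - 1)

lemma w4i_prop : ∀ d : ZMod 4, w4i (d + 1) + w4i (d + (-1)) = 0 := by decide

lemma w4_prop : ∀ d : ZMod 4, w4 (d + 1) + w4 (d + (-1)) = 0 := by
  intro d
  unfold w4
  rw [← Int.cast_add]
  rw [w4i_prop d]
  exact Int.cast_zero

lemma wm_prop (m : ℕ) (hm : 4 ∣ m) :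
    ∀ c : ZMod m, wm m hm (c + 1) + wm m hm (c + (-1)) = 0 := by
  intro c
  unfold wm
  rw [map_add, map_add, _root_.map_one, map_neg, _root_.map_one]
  exact w4_prop _

lemma wm'_prop (m : ℕ) (hm : 4 ∣ m) :
    ∀ c : ZMod m, wm' m hm (c + 1) + wm' m hm (c + (-1)) = 0 := by
  intro c
  unfold wm'
  have h1 : c + 1 - 1 = (c - 1) + 1 := by ring
  have h2 : c + (-1) - 1 = (c - 1) + (-1) := by ring
  rw [h1, h2]
  exact wm_prop m hm _

lemma wm_zero (m : ℕ) (hm : 4 ∣ m) : wm m hm 0 = 1 := by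
  unfold wm w4 w4i
  rw [map_zero, if_pos rfl]
  exact Int.cast_one

lemma wm_one (m : ℕ) (hm : 4 ∣ m) : wm m hm 1 = 0 := by
  unfold wm w4 w4i
  rw [_root_.map_one, if_neg (by decide), if_neg (by decide)]
  exact Int.cast_zero

lemma wm'_zero (m : ℕ) (hm : 4 ∣ m) : wm' m hm 0 = 0 := by
  unfold wm' wm w4 w4i
  rw [zero_sub, map_neg, _root_.map_one, if_neg (by decide), if_neg (by decide)]
  exact Int.cast_zero

lemma wm'_one (m : ℕ) (hm : 4 ∣ m) : wm' m hm 1 = 1 := by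
  unfold wm'
  rw [sub_self]
  exact wm_zero m hm

lemma pancakeAdj_comm {m n : ℕ} (σ τ : ColouredPerm m n) :
    pancakeAdj m n σ τ ↔ pancakeAdj m n τ σ := by
  constructor <;> rintro ⟨h1, l, a, b, ε, hε, hor⟩ <;>
    exact ⟨Ne.symm h1, l, a, b, ε, hε, hor.symm⟩

open Classical in
lemma pancake_herm (m n : ℕ) : (pancakeAdjMatrix m n).IsHermitian := by
  show (pancakeAdjMatrix m n).conjTranspose = pancakeAdjMatrix m n
  ext σ τ
  rw [Matrix.conjTranspose_apply]
  show star (if pancakeAdj m n τ σ then (1:ℝ) else 0) = _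
  rw [star_trivial]
  exact if_congr (pancakeAdj_comm τ σ) rfl rfl

lemma charpoly_hermitian_eq_prod {V : Type*} [Fintype V] [DecidableEq V]
    {A : Matrix V V ℝ} (hA : A.IsHermitian) :
    A.charpoly = ∏ i, (X - C (hA.eigenvalues i)) := by
  set U : Matrix V V ℝ := (hA.eigenvectorUnitary : Matrix V V ℝ) with hU
  have h1 : star U * U = 1 := (Matrix.mem_unitaryGroup_iff').mp (hA.eigenvectorUnitary).2
  have hdiag : star U * A * U = Matrix.diagonal hA.eigenvalues := by
    have := Matrix.IsHermitian.conjStarAlgAut_star_eigenvectorUnitary hA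
    rw [Unitary.conjStarAlgAut_star_apply] at this
    simpa using this
  have hUU : (star U).map ⇑(C : ℝ →+* ℝ[X]) * U.map ⇑C = 1 := by
    rw [← Matrix.map_mul, h1, Matrix.map_one _ (map_zero C) (map_one C)]
  have hchar : (star U).map ⇑(C : ℝ →+* ℝ[X]) * A.charmatrix * U.map ⇑C
      = (star U * A * U).charmatrix := by
    simp only [Matrix.charmatrix, RingHom.mapMatrix_apply]
    rw [mul_sub, sub_mul]
    congr 1
    · rw [mul_assoc, (Matrix.scalar_commute (X : ℝ[X]) (fun r' => Commute.all _ _) (U.map ⇑C)).eq]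
      rw [← mul_assoc, hUU, one_mul]
    · rw [← Matrix.map_mul, ← Matrix.map_mul]
  have hdet : A.charpoly = (Matrix.diagonal hA.eigenvalues).charpoly := by
    have h2 := congrArg Matrix.det hchar
    rw [hdiag, Matrix.det_mul, Matrix.det_mul] at h2
    have h3 : ((star U).map ⇑(C : ℝ →+* ℝ[X])).det * (U.map ⇑C).det = 1 := by
      rw [← Matrix.det_mul, hUU, Matrix.det_one]
    have h4 : ((star U).map ⇑(C : ℝ →+* ℝ[X])).det * A.charmatrix.det * (U.map ⇑C).det
        = A.charmatrix.det * (((star U).map ⇑(C : ℝ →+* ℝ[X])).det * (U.map ⇑C).det) := by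
      ring
    rw [h4, h3, mul_one] at h2
    exact h2
  rw [hdet]
  have h2 : (Matrix.diagonal hA.eigenvalues).charmatrix
      = Matrix.diagonal (fun i => X - C (hA.eigenvalues i)) := by
    ext i j
    by_cases h : i = j
    · subst h; simp [Matrix.charmatrix_apply_eq]
    · simp [Matrix.charmatrix_apply_ne _ _ _ h, Matrix.diagonal_apply_ne _ h]
  rw [Matrix.charpoly, h2, Matrix.det_diagonal]

lemma rootMultiplicity_prod_X_sub_C {V : Type*} [Fintype V] [DecidableEq V]
    (d : V → ℝ) (μ : ℝ) :
    (∏ i, (X - C (d i))).rootMultiplicity μ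
      = (Finset.univ.filter fun i => d i = μ).card := by
  classical
  have h : (∏ i, (X - C (d i)))
      = ((Finset.univ.val.map d).map fun a => X - (C a : ℝ[X])).prod := by
    rw [Multiset.map_map]; rfl
  rw [← Polynomial.count_roots, h, Polynomial.roots_multiset_prod_X_sub_C,
    Multiset.count_map]
  simp only [Finset.card_def, Finset.filter_val]
  congr 1
  exact Multiset.filter_congr fun x _ => eq_comm

lemma coeff_vanish {V : Type*} [Fintype V] [DecidableEq V]
    {A : Matrix V V ℝ} (hA : A.IsHermitian) {μ : ℝ}
    {x : EuclideanSpace ℝ V} (hx : A *ᵥ x = μ • x) {i : V}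
    (hi : hA.eigenvalues i ≠ μ) : hA.eigenvectorBasis.repr x i = 0 := by
  have hAT : Aᵀ = A := by
    have h := hA.eq
    ext a b
    have := congrFun (congrFun h a) b
    simpa [Matrix.conjTranspose_apply] using this
  set b := hA.eigenvectorBasis with hb
  have e0 : dotProduct (A *ᵥ ⇑(b i)) x
      = hA.eigenvalues i * dotProduct (⇑(b i)) x := by
    rw [hA.mulVec_eigenvectorBasis]
    exact smul_dotProduct _ _ _
  have e1 : dotProduct (A *ᵥ ⇑(b i)) x
      = μ * dotProduct (⇑(b i)) x := by
    rw [dotProduct_comm, dotProduct_mulVec, ← Matrix.mulVec_transpose, hAT,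
      ← dotProduct_comm, hx, dotProduct_smul]
    rfl
  have h2 : (hA.eigenvalues i - μ) * dotProduct (⇑(b i)) x = 0 := by
    rw [sub_mul, ← e0, ← e1, sub_self]
  have hdp : dotProduct (⇑(b i)) x = 0 := by
    rcases mul_eq_zero.mp h2 with h | h
    · exact absurd (sub_eq_zero.mp h) hi
    · exact h
  rw [OrthonormalBasis.repr_apply_apply, EuclideanSpace.inner_eq_star_dotProduct]
  simpa [dotProduct_comm] using hdp

lemma three_le_rootMultiplicity {V : Type*} [Fintype V] [DecidableEq V]
    {A : Matrix V V ℝ} (hA : A.IsHermitian) (μ : ℝ)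
    (v : Fin 3 → EuclideanSpace ℝ V) (hli : LinearIndependent ℝ v)
    (hev : ∀ j, A *ᵥ (v j) = μ • (v j)) :
    3 ≤ A.charpoly.rootMultiplicity μ := by
  classical
  rw [charpoly_hermitian_eq_prod hA, rootMultiplicity_prod_X_sub_C]
  set S : Finset V := Finset.univ.filter fun i => hA.eigenvalues i = μ with hS
  set b := hA.eigenvectorBasis with hb
  set W : Submodule ℝ (EuclideanSpace ℝ V) :=
    Submodule.span ℝ ((fun i => (b i : EuclideanSpace ℝ V)) '' ↑S) with hW
  have hmem : ∀ j, v j ∈ W := by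
    intro j
    have hrepr : ∑ i, b.repr (v j) i • b i = v j := b.sum_repr (v j)
    rw [← hrepr]
    apply Submodule.sum_mem
    intro i _
    by_cases hiS : i ∈ S
    · exact Submodule.smul_mem _ _ (Submodule.subset_span ⟨i, hiS, rfl⟩)
    · have : hA.eigenvalues i ≠ μ := by
        intro h; exact hiS (Finset.mem_filter.mpr ⟨Finset.mem_univ _, h⟩)
      rw [coeff_vanish hA (hev j) this, zero_smul]
      exact Submodule.zero_mem _
  have h1 : 3 ≤ Module.finrank ℝ W := by
    have hw : LinearIndependent ℝ (fun j => (⟨v j, hmem j⟩ : W)) := by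
      apply LinearIndependent.of_comp W.subtype
      convert hli
      rfl
    have := hw.fintype_card_le_finrank
    simpa using this
  have h2 : Module.finrank ℝ W ≤ S.card := by
    have : Module.finrank ℝ W ≤ (S.image fun i => (b i : EuclideanSpace ℝ V)).card := by
      rw [hW, ← Finset.coe_image]
      exact (finrank_span_finset_le_card _)
    exact this.trans (Finset.card_image_le)
  omega
end AuxProof

/-- For `m ≡ 0 (mod 4)` (with `m ≥ 1`), `n ≥ 2`, and
`1 ≤ k ≤ n − 1` with `k ≠ ⌊n/2⌋`, the multiplicity of `2k` as an eigenvalue of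
the adjacency matrix of `𝒫_m(n)` (i.e. as a root of its characteristic
polynomial) is at least `3`. -/
theorem pancake_eigenvalue_multiplicity_three (m n k : ℕ) (hm1 : 1 ≤ m)
    (hm4 : m % 4 = 0) (hn : 2 ≤ n) (hk1 : 1 ≤ k) (hk2 : k ≤ n - 1)
    (hk3 : k ≠ n / 2) :
    haveI : NeZero m := ⟨by omega⟩
    3 ≤ (pancakeAdjMatrix m n).charpoly.rootMultiplicity ((2 * k : ℕ) : ℝ) := by
  haveI : NeZero m := ⟨by omega⟩
  have hm : 4 ∣ m := Nat.dvd_of_mod_eq_zero hm4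
  have hkn : k < n := by omega
  have h0n : 0 < n := by omega
  have h1n : 1 < n := by omega
  set kF : Fin n := ⟨k, hkn⟩ with hkF
  set s0 : Fin n := ⟨0, h0n⟩ with hs0
  set s1 : Fin n := ⟨1, h1n⟩ with hs1
  have hs01 : s0 ≠ s1 := by intro h; exact absurd (congrArg Fin.val h) (by simp [hs0, hs1])
  have hs0k : s0 ≠ kF := by
    intro h; have := congrArg Fin.val h; simp only [hs0, hkF, Fin.val_mk] at this; omega
  set v : Fin 3 → EuclideanSpace ℝ (ColouredPerm m n) :=
    ![WithLp.toLp 2 (eigVec s0 kF (wm m hm)), WithLp.toLp 2 (eigVec s1 kF (wm m hm)),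
      WithLp.toLp 2 (eigVec s0 kF (wm' m hm))] with hv
  have hev : ∀ j : Fin 3,
      Matrix.mulVec (pancakeAdjMatrix m n) (v j) = ((2 * k : ℕ) : ℝ) • (v j) := by
    intro j
    have e0 := mulVec_eigVec (n := n) hm s0 kF (wm m hm) (wm_prop m hm)
    have e1 := mulVec_eigVec (n := n) hm s1 kF (wm m hm) (wm_prop m hm)
    have e2 := mulVec_eigVec (n := n) hm s0 kF (wm' m hm) (wm'_prop m hm)
    fin_cases j
    · exact e0
    · exact e1
    · exact e2
  -- vertices used to test linear independence
  set σa : ColouredPerm m n := (fun _ => (0 : ZMod m), Equiv.swap s0 kF) with hσa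
  set σb : ColouredPerm m n := (fun _ => (0 : ZMod m), Equiv.swap s1 kF) with hσb
  set σc : ColouredPerm m n := (fun _ => (1 : ZMod m), Equiv.swap s0 kF) with hσc
  have hswap_a : (Equiv.swap s0 kF)⁻¹ s0 = kF := by
    rw [Equiv.swap_inv, Equiv.swap_apply_left]
  have hswap_a1 : (Equiv.swap s0 kF)⁻¹ s1 ≠ kF := by
    rw [Equiv.swap_inv]
    by_cases h1 : s1 = kF
    · rw [h1, Equiv.swap_apply_right]
      exact hs0k
    · rw [Equiv.swap_apply_of_ne_of_ne (Ne.symm hs01) h1]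
      exact h1
  have hswap_b0 : (Equiv.swap s1 kF)⁻¹ s0 ≠ kF := by
    rw [Equiv.swap_inv, Equiv.swap_apply_of_ne_of_ne hs01 hs0k]
    exact hs0k
  have hswap_b1 : (Equiv.swap s1 kF)⁻¹ s1 = kF := by
    rw [Equiv.swap_inv, Equiv.swap_apply_left]
  have va0 : eigVec s0 kF (wm m hm) σa = 1 := by
    unfold eigVec; rw [if_pos hswap_a]; exact wm_zero m hm
  have va1 : eigVec s1 kF (wm m hm) σa = 0 := by
    unfold eigVec; rw [if_neg hswap_a1]
  have va2 : eigVec s0 kF (wm' m hm) σa = 0 := by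
    unfold eigVec; rw [if_pos hswap_a]; exact wm'_zero m hm
  have vb0 : eigVec s0 kF (wm m hm) σb = 0 := by
    unfold eigVec; rw [if_neg hswap_b0]
  have vb1 : eigVec s1 kF (wm m hm) σb = 1 := by
    unfold eigVec; rw [if_pos hswap_b1]; exact wm_zero m hm
  have vb2 : eigVec s0 kF (wm' m hm) σb = 0 := by
    unfold eigVec; rw [if_neg hswap_b0]
  have vc0 : eigVec s0 kF (wm m hm) σc = 0 := by
    unfold eigVec; rw [if_pos hswap_a]; exact wm_one m hm
  have vc1 : eigVec s1 kF (wm m hm) σc = 0 := by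
    unfold eigVec; rw [if_neg hswap_a1]
  have vc2 : eigVec s0 kF (wm' m hm) σc = 1 := by
    unfold eigVec; rw [if_pos hswap_a]; exact wm'_one m hm
  have hli : LinearIndependent ℝ v := by
    rw [Fintype.linearIndependent_iff]
    intro g hg
    have ha := congrArg (fun x => x σa) hg
    have hb := congrArg (fun x => x σb) hg
    have hc := congrArg (fun x => x σc) hg
    simp only [hv, Finset.sum_apply, Pi.smul_apply, smul_eq_mul, Fin.sum_univ_three,
      Matrix.cons_val_zero, Matrix.cons_val_one, Matrix.head_cons, Pi.zero_apply,
      Matrix.cons_val_two, Matrix.tail_cons] at ha hb hc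
    have hz : ∀ σ' : ColouredPerm m n, (0 : EuclideanSpace ℝ (ColouredPerm m n)) σ' = 0 :=
      fun _ => rfl
    have hadd : ∀ (x y : EuclideanSpace ℝ (ColouredPerm m n)) (σ' : ColouredPerm m n),
        (x + y) σ' = x σ' + y σ' := fun _ _ _ => rfl
    have hsmul : ∀ (c : ℝ) (x : EuclideanSpace ℝ (ColouredPerm m n)) (σ' : ColouredPerm m n),
        (c • x) σ' = c * x σ' := fun _ _ _ => rfl
    simp only [hadd, hsmul, hz, WithLp.ofLp_toLp] at ha hb hc
    rw [va0, va1, va2] at ha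
    rw [vb0, vb1, vb2] at hb
    rw [vc0, vc1, vc2] at hc
    intro i
    fin_cases i <;> simp <;> linarith
  exact three_le_rootMultiplicity (pancake_herm m n) _ v hli hev
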